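/- Let G be a directed acyclic graph with target T, let v be a vertex, and let P ⊆ pa(v) be any set of observed parents of v. Let G* be the graph obtained by node-splitting v on P, producing v(P=∅) with edge v(P=∅) → v. Let Z be a conditioning set with v ∉ Z. If in G there is an unstable path from v to T with respect to Z whose first edge leaves v through a child of v (i.e., of the form v → X … T) and which is active with respect to Z, then in G* the corresponding path v(P=∅) → v → X … T from v(P=∅) to T is an unstable path that is active with respect to Z. That is, unstable active paths from v beginning through a child of v are inherited by every counterfactual version of v obtained by node-splitting. -/

import Mathlib

/-! Basic definitions for paths, colliders, activation (d-connection), and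
(un)stability in a directed graph, following the paper's conventions.

* A directed graph on vertex type `V` is an edge relation `E : V → V → Prop`.
* A path is a list of distinct vertices consecutively joined by edges of the
  graph traversed in either direction.
* A vertex `w` is a collider on a path if both path edges at `w` point into `w`.
* Given a conditioning set `Z`, a path is active w.r.t. `Z` if every collider on
  the path is in `Z` or has a descendant in `Z`, and every interior non-collider
  on the path is not in `Z`.
* A path is unstable (w.r.t. an optional selection vertex `S` and a set `U` of
  unobserved vertices) if it contains `S` or a vertex of `U`. -/

variable {V : Type*}

/-- A path: a list of distinct vertices, consecutive ones joined by an edge of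
the graph traversed in either direction. -/
def IsUndirPath (E : V → V → Prop) (p : List V) : Prop :=
  p.Nodup ∧ p.Chain' (fun a b => E a b ∨ E b a)

/-- `p` is a path between `a` and `b`. -/
def PathBetween (E : V → V → Prop) (a b : V) (p : List V) : Prop :=
  IsUndirPath E p ∧ p.head? = some a ∧ p.getLast? = some b

/-- `w` is a collider on the path `p`: both path edges at `w` point into `w`. -/
def IsColliderOn (E : V → V → Prop) (p : List V) (w : V) : Prop :=
  ∃ a b, [a, w, b] <:+: p ∧ E a w ∧ E b w

/-- A path `p` is active with respect to the conditioning set `Z`: every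
collider on `p` is in `Z` or has a descendant in `Z`, and every (interior)
non-collider on `p` is not in `Z`. -/
def ActivePath (E : V → V → Prop) (Z : Set V) (p : List V) : Prop :=
  (∀ w, IsColliderOn E p w → w ∈ Z ∨ ∃ d ∈ Z, Relation.TransGen E w d) ∧
  (∀ w ∈ p.tail.dropLast, ¬ IsColliderOn E p w → w ∉ Z)

/-- A path is unstable if it contains the selection vertex `S` or an unobserved
vertex of `U`. -/
def UnstablePath (S : Option V) (U : Set V) (p : List V) : Prop :=
  ∃ w ∈ p, w ∈ U ∨ S = some w

/-- The edge relation is acyclic (the graph is a DAG). -/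
def AcyclicRel (E : V → V → Prop) : Prop :=
  ∀ v, ¬ Relation.TransGen E v v

/-- A conditioning set `Z` is stable: no member of `Z` has an active unstable
path to the target `T` with respect to `Z`. -/
def StableSet (E : V → V → Prop) (S : Option V) (U : Set V) (T : V) (Z : Set V) : Prop :=
  ∀ x ∈ Z, ∀ p : List V, PathBetween E T x p → ActivePath E Z p → ¬ UnstablePath S U p

/-- A directed graph with an explicit vertex set (so that node-splitting can
insert a fresh vertex). -/
structure GraphState (V : Type*) where
  verts : Set V
  edge : V → V → Prop

/-- The node-splitting operation on a vertex `v` with intervention set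
`P ⊆ pa(v)` and fresh counterfactual vertex `w = v(P=∅)`:
* insert the new vertex `w`;
* delete each edge `x → v` for `x ∈ pa(v) \ P`;
* insert an edge `x → w` for each `x ∈ pa(v) \ P`;
* insert the edge `w → v`. -/
def nodeSplit (G : GraphState V) (v w : V) (P : Set V) : GraphState V where
  verts := insert w G.verts
  edge := fun a b =>
    (G.edge a b ∧ ¬ (b = v ∧ a ∉ P)) ∨
    (b = w ∧ G.edge a v ∧ a ∉ P) ∨
    (a = w ∧ b = v)


private lemma chain'_of_mem_imp {R S : V → V → Prop} :
    ∀ {l : List V}, (∀ a ∈ l, ∀ b ∈ l, R a b → S a b) → l.Chain' R → l.Chain' S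
  | [], _, _ => List.isChain_nil
  | [_], _, _ => List.isChain_singleton _
  | a :: b :: t, h, hc => by
    unfold List.Chain' at hc ⊢
    rw [List.isChain_cons_cons] at hc ⊢
    exact ⟨h a (by simp) b (by simp) hc.1,
      chain'_of_mem_imp (fun x hx y hy =>
        h x (List.mem_cons_of_mem _ hx) y (List.mem_cons_of_mem _ hy)) hc.2⟩

private lemma nodeSplit_edge_of_ne {G : GraphState V} {v w : V} {P : Set V} {a b : V}
    (h : G.edge a b) (hb : b ≠ v) : (nodeSplit G v w P).edge a b :=
  Or.inl ⟨h, fun hc => hb hc.1⟩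

private lemma transGen_nodeSplit {G : GraphState V} {v w : V} {P : Set V} {c d : V}
    (h : Relation.TransGen G.edge c d) :
    Relation.TransGen (nodeSplit G v w P).edge c d := by
  have step : ∀ x y, G.edge x y → Relation.TransGen (nodeSplit G v w P).edge x y := by
    intro x y hxy
    by_cases hy : y = v ∧ x ∉ P
    · obtain ⟨hyv, hxP⟩ := hy
      subst hyv
      exact Relation.TransGen.head (Or.inr (Or.inl ⟨rfl, hxy, hxP⟩))
        (Relation.TransGen.single (Or.inr (Or.inr ⟨rfl, rfl⟩)))
    · exact Relation.TransGen.single (Or.inl ⟨hxy, hy⟩)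
  induction h with
  | single h1 => exact step _ _ h1
  | tail _ h1 ih => exact ih.trans (step _ _ h1)

/-- Let `G` be a DAG with target `T`, `v` a vertex, and
`P ⊆ pa(v)` any set of observed parents of `v`.  Let `G*` be the graph obtained
by node-splitting `v` on `P`, producing `w = v(P=∅)` with edge `w → v`.  Let `Z`
be a conditioning set with `v ∉ Z`.  If in `G` there is an unstable path `p`
from `v` to `T` w.r.t. `Z` whose first edge leaves `v` through a child `X` of
`v` (i.e. `p` has the form `v → X … T`) and which is active w.r.t. `Z`, then in
`G*` the corresponding path `w :: p`, i.e. `v(P=∅) → v → X … T`, is an unstable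
path from `v(P=∅)` to `T` that is active w.r.t. `Z`: unstable active paths from
`v` beginning through a child of `v` are inherited by every counterfactual
version of `v` obtained by node-splitting. -/
theorem nodeSplit_inherits_unstable_paths_through_children
    {G : GraphState V} (hdag : AcyclicRel G.edge)
    {S : Option V} {U Obs : Set V} {T v w X : V} {P : Set V}
    (hP : ∀ x ∈ P, G.edge x v) (hPobs : P ⊆ Obs)
    (hfresh : w ∉ G.verts) (hwU : w ∉ U) (hwS : S ≠ some w)
    {Z : Set V} (hvZ : v ∉ Z) (hwZ : w ∉ Z)
    {p : List V} (hpverts : ∀ x ∈ p, x ∈ G.verts)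
    (hp : PathBetween G.edge v T p) (hfirst : [v, X] <+: p) (hchild : G.edge v X)
    (hunst : UnstablePath S U p) (hact : ActivePath G.edge Z p) :
    PathBetween (nodeSplit G v w P).edge w T (w :: p) ∧
      UnstablePath S U (w :: p) ∧ ActivePath (nodeSplit G v w P).edge Z (w :: p) := by
  obtain ⟨⟨hnd, hch⟩, hhead, hlast⟩ := hp
  obtain ⟨t, ht⟩ := hfirst
  have hp_eq : p = v :: X :: t := ht.symm
  subst hp_eq
  have hwp : w ∉ v :: X :: t := fun h => hfresh (hpverts w h)
  have hvt : v ∉ X :: t := (List.nodup_cons.mp hnd).1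
  have hvw : v ≠ w := fun h => hfresh (h ▸ hpverts v (by simp))
  have hXw : X ≠ w := fun h => hfresh (h ▸ hpverts X (by simp))
  have hXv : X ≠ v := fun h => hvt (by simp [h])
  have hne_w : ∀ x ∈ v :: X :: t, x ≠ w := fun x hx h => hfresh (h ▸ hpverts x hx)
  -- colliders on the old path are colliders on the new path
  have collOld : ∀ c, IsColliderOn G.edge (v :: X :: t) c →
      IsColliderOn (nodeSplit G v w P).edge (w :: v :: X :: t) c := by
    rintro c ⟨a, b, hinf, hac, hbc⟩
    have hcmem : c ∈ X :: t := by
      rcases List.infix_cons_iff.mp hinf with hpre | hinf'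
      · obtain ⟨s, hs⟩ := hpre
        simp only [List.cons_append, List.nil_append, List.cons.injEq] at hs
        rw [hs.2.1]; exact List.mem_cons_self
      · exact hinf'.subset (by simp)
    have hcv : c ≠ v := fun h => hvt (h ▸ hcmem)
    exact ⟨a, b, hinf.trans (List.suffix_cons w _).isInfix,
      nodeSplit_edge_of_ne hac hcv, nodeSplit_edge_of_ne hbc hcv⟩
  -- colliders on the new path are colliders on the old path
  have collNew : ∀ c, IsColliderOn (nodeSplit G v w P).edge (w :: v :: X :: t) c →
      IsColliderOn G.edge (v :: X :: t) c := by
    rintro c ⟨a, b, hinf, hac, hbc⟩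
    rcases List.infix_cons_iff.mp hinf with hpre | hinf'
    · -- the triple is a prefix of w :: v :: X :: t : a = w, c = v, b = X
      obtain ⟨s, hs⟩ := hpre
      simp only [List.cons_append, List.nil_append, List.cons.injEq] at hs
      obtain ⟨haw, hcv, hbX, -⟩ := hs
      rw [hbX, hcv] at hbc
      rcases hbc with ⟨hXv', -⟩ | ⟨hvw', -⟩ | ⟨hXw', -⟩
      · exact absurd (Relation.TransGen.head hchild (Relation.TransGen.single hXv')) (hdag v)
      · exact absurd hvw' hvw
      · exact absurd hXw' hXw
    · -- the triple is an infix of v :: X :: t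
      have hcmem : c ∈ X :: t := by
        rcases List.infix_cons_iff.mp hinf' with hpre | hinf''
        · obtain ⟨s, hs⟩ := hpre
          simp only [List.cons_append, List.nil_append, List.cons.injEq] at hs
          rw [hs.2.1]; exact List.mem_cons_self
        · exact hinf''.subset (by simp)
      have hcv : c ≠ v := fun h => hvt (h ▸ hcmem)
      have hcw : c ≠ w := hne_w c (List.mem_cons_of_mem _ hcmem)
      have hac' : G.edge a c := by
        rcases hac with ⟨h, -⟩ | ⟨hcw', -⟩ | ⟨-, hcv'⟩
        · exact h
        · exact absurd hcw' hcw
        · exact absurd hcv' hcv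
      have hbc' : G.edge b c := by
        rcases hbc with ⟨h, -⟩ | ⟨hcw', -⟩ | ⟨-, hcv'⟩
        · exact h
        · exact absurd hcw' hcw
        · exact absurd hcv' hcv
      exact ⟨a, b, hinf', hac', hbc'⟩
  refine ⟨⟨⟨?_, ?_⟩, ?_, ?_⟩, ?_, ?_, ?_⟩
  · exact List.nodup_cons.mpr ⟨hwp, hnd⟩
  · unfold List.Chain'
    rw [List.isChain_cons_cons]
    refine ⟨Or.inl (Or.inr (Or.inr ⟨rfl, rfl⟩)), ?_⟩
    unfold List.Chain' at hch
    rw [List.isChain_cons_cons] at hch ⊢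
    refine ⟨Or.inl (nodeSplit_edge_of_ne hchild hXv), ?_⟩
    refine chain'_of_mem_imp ?_ hch.2
    intro a ha b hb hab
    have hbv : b ≠ v := fun h => hvt (h ▸ hb)
    have hav : a ≠ v := fun h => hvt (h ▸ ha)
    rcases hab with h | h
    · exact Or.inl (nodeSplit_edge_of_ne h hbv)
    · exact Or.inr (nodeSplit_edge_of_ne h hav)
  · rfl
  · rw [List.getLast?_cons_cons]; exact hlast
  · obtain ⟨u, hu, h⟩ := hunst
    exact ⟨u, List.mem_cons_of_mem _ hu, h⟩
  · intro c hc
    rcases hact.1 c (collNew c hc) with h | ⟨d, hd, htr⟩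
    · exact Or.inl h
    · exact Or.inr ⟨d, hd, transGen_nodeSplit htr⟩
  · intro x hx hnc
    simp only [List.tail_cons, List.dropLast_cons₂, List.mem_cons] at hx
    rcases hx with rfl | hx
    · exact hvZ
    · exact hact.2 x (by simpa using hx) (fun hcoll => hnc (collOld x hcoll))
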